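/- Let X = {x_1, ..., x_m} be a set of nonempty binary strings, and let the directed edge-periodic cycle be constructed as in the reduction (vertices v_0, ..., v_m, s; τ((v_m, s)) = 0^m 1 0^(m+1); τ((s, v_0)) = 0^(2m+1) 1; τ((v_{j−1}, v_j)) the block encoding of x_j with blocks ξ(c) = c^m 0 1^(m+1) of length q = 2m+2). If for every position t there exists some x ∈ X with x[t mod |x|] = 0, then the robber has a strategy evading the cop forever; hence the cycle is robber-winning. -/
import Mathlib


namespace EPD

/-- The directed edge from vertex `e` to vertex `e+1` of the cycle is present at time `t`
iff its string `τ e` has a `1` at position `t mod |τ e|`. -/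
def present {n : ℕ} (τ : Fin n → List Bool) (e : Fin n) (t : ℕ) : Prop :=
  (τ e).getD (t % (τ e).length) false = true

/-- A legal move on the directed edge-periodic cycle at time `t`: stay, or cross to the
(forward) neighbour along a directed edge present at time `t`. -/
def moveOK {n : ℕ} (τ : Fin n → List Bool) (t : ℕ) (u v : Fin n) : Prop :=
  v = u ∨ (v.val = (u.val + 1) % n ∧ present τ u t)

/-- A strategy: given the time and both current positions, produce the mover's next
vertex. -/
abbrev Strat (n : ℕ) := ℕ → Fin n → Fin n → Fin n

def copValid {n : ℕ} (τ : Fin n → List Bool) (σ : Strat n) : Prop :=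
  ∀ t u r, moveOK τ t u (σ t u r)

def robValid {n : ℕ} (τ : Fin n → List Bool) (σ : Strat n) : Prop :=
  ∀ t c r, moveOK τ t r (σ t c r)

/-- Positions (cop, robber) at the beginning of round `t`; each round the cop moves
first, then the robber (seeing the cop's new position). -/
def pos {n : ℕ} (σc σr : Strat n) (c0 r0 : Fin n) : ℕ → Fin n × Fin n
  | 0 => (c0, r0)
  | t + 1 =>
      let p := pos σc σr c0 r0 t
      let c' := σc t p.1 p.2
      (c', σr t c' p.2)

/-- The cop eventually catches the robber: either the robber starts on the cop's vertex,
or some cop move lands on the robber's current vertex. -/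
def caught {n : ℕ} (σc σr : Strat n) (c0 r0 : Fin n) : Prop :=
  c0 = r0 ∨ ∃ t,
    σc t (pos σc σr c0 r0 t).1 (pos σc σr c0 r0 t).2 = (pos σc σr c0 r0 t).2

def copWinning {n : ℕ} (τ : Fin n → List Bool) : Prop :=
  ∃ c0 σc, copValid τ σc ∧ ∀ r0 σr, robValid τ σr → caught σc σr c0 r0

def robberWinning {n : ℕ} (τ : Fin n → List Bool) : Prop :=
  ∀ c0 σc, copValid τ σc → ∃ r0 σr, robValid τ σr ∧ ¬ caught σc σr c0 r0

/-- The gadget block `ξ(c) = c^m 0 1^(m+1)` of length `q = 2m+2`. -/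
def xiBlock (m : ℕ) (c : Bool) : List Bool :=
  List.replicate m c ++ [false] ++ List.replicate (m + 1) true

/-- The block encoding `ξ(x[0]) ⋯ ξ(x[|x|-1])` of a binary string `x`. -/
def encode (m : ℕ) (x : List Bool) : List Bool := (x.map (xiBlock m)).flatten

/-- The edge strings of the directed edge-periodic cycle of the reduction, on vertices
`v_0, ..., v_m, s` (vertex `s` is `⟨m+1⟩`): edge `(v_j, v_{j+1})` (for `j < m`) carries
the block encoding of `x_{j+1}`; edge `(v_m, s)` carries `0^m 1 0^(m+1)`;
edge `(s, v_0)` carries `0^(2m+1) 1`. Edges are indexed by their source vertex. -/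
def tauRed (m : ℕ) (x : Fin m → List Bool) : Fin (m + 2) → List Bool := fun e =>
  if h : e.val < m then encode m (x ⟨e.val, h⟩)
  else if e.val = m then
    List.replicate m false ++ [true] ++ List.replicate (m + 1) false
  else List.replicate (2 * m + 1) false ++ [true]

end EPD

namespace EPD

lemma getD_rep {k : ℕ} {a d : Bool} {i : ℕ} (h : i < k) :
    (List.replicate k a).getD i d = a := by
  simp [List.getD_eq_getElem?_getD, List.getElem?_replicate, h]

lemma xiBlock_length (m : ℕ) (c : Bool) : (xiBlock m c).length = 2*m+2 := by
  simp [xiBlock]; omega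

lemma xiBlock_getD (m : ℕ) (c : Bool) (o : ℕ) (ho : o < 2*m+2) :
    (xiBlock m c).getD o false = if o < m then c else if o = m then false else true := by
  have h1 : (List.replicate m c).length = m := by simp
  have h2 : (List.replicate m c ++ [false]).length = m + 1 := by simp
  unfold xiBlock
  rcases lt_trichotomy o m with h | h | h
  · rw [List.getD_append _ _ _ _ (by rw [h2]; omega),
      List.getD_append _ _ _ _ (by rw [h1]; omega), getD_rep h, if_pos h]
  · rw [List.getD_append _ _ _ _ (by rw [h2]; omega),
      List.getD_append_right _ _ _ _ (by rw [h1]; omega), h1]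
    subst h
    simp
  · rw [List.getD_append_right _ _ _ _ (by rw [h2]; omega), h2,
      getD_rep (show o - (m+1) < m + 1 by omega)]
    rw [if_neg (by omega), if_neg (by omega)]

lemma encode_length (m : ℕ) (w : List Bool) : (encode m w).length = (2*m+2) * w.length := by
  induction w with
  | nil => simp [encode]
  | cons a w ih =>
    simp only [encode, List.map_cons, List.flatten_cons, List.length_append] at *
    rw [ih, xiBlock_length, List.length_cons]; ring

lemma encode_getD (m : ℕ) (w : List Bool) (b o : ℕ) (hb : b < w.length) (ho : o < 2*m+2) :
    (encode m w).getD ((2*m+2)*b + o) false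
      = (xiBlock m (w.getD b false)).getD o false := by
  induction w generalizing b with
  | nil => simp at hb
  | cons a w ih =>
    have hco : encode m (a :: w) = xiBlock m a ++ encode m w := by
      simp [encode]
    cases b with
    | zero =>
      rw [hco, List.getD_append _ _ _ _ (by rw [xiBlock_length]; omega)]
      simp
    | succ b =>
      rw [hco, List.getD_append_right _ _ _ _ (by rw [xiBlock_length]; ring_nf; omega)]
      rw [xiBlock_length]
      have : (2*m+2) * (b+1) + o - (2*m+2) = (2*m+2)*b + o := by ring_nf; omega
      rw [this, ih b (by simpa using hb)]
      simp


lemma present_lt {m : ℕ} (x : Fin m → List Bool) (hne : ∀ j, x j ≠ [])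
    (e : Fin (m+2)) (j : Fin m) (hej : e.val = j.val) (t : ℕ) :
    present (tauRed m x) e t ↔
      (m+1 ≤ t % (2*m+2) ∨
        (t % (2*m+2) < m ∧ (x j).getD ((t/(2*m+2)) % (x j).length) false = true)) := by
  have hjm : e.val < m := by rw [hej]; exact j.2
  have hx : (⟨e.val, hjm⟩ : Fin m) = j := Fin.ext hej
  have hτ : tauRed m x e = encode m (x j) := by rw [tauRed, dif_pos hjm, hx]
  have hL : 0 < (x j).length := List.length_pos_iff.2 (hne j)
  have hlen : (encode m (x j)).length = (2*m+2) * (x j).length := encode_length m (x j)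
  have hkey : t % ((2*m+2) * (x j).length)
      = (2*m+2) * ((t / (2*m+2)) % (x j).length) + t % (2*m+2) := by
    rw [Nat.mod_mul]; ring
  rw [present, hτ, hlen, hkey,
    encode_getD m (x j) _ _ (Nat.mod_lt _ hL) (Nat.mod_lt _ (by omega)),
    xiBlock_getD m _ _ (Nat.mod_lt _ (by omega))]
  have hom : t % (2*m+2) < 2*m+2 := Nat.mod_lt _ (by omega)
  rcases lt_trichotomy (t % (2*m+2)) m with h | h | h
  · rw [if_pos h]
    constructor
    · intro hc; exact Or.inr ⟨h, hc⟩
    · rintro (hc | ⟨_, hc⟩); · omega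
      · exact hc
  · rw [if_neg (by omega), if_pos h]
    constructor
    · intro hc; exact absurd hc (by simp)
    · rintro (hc | ⟨hc, _⟩) <;> omega
  · rw [if_neg (by omega), if_neg (by omega)]
    simp; omega

lemma present_m {m : ℕ} (x : Fin m → List Bool) (e : Fin (m+2)) (he : e.val = m) (t : ℕ) :
    present (tauRed m x) e t ↔ t % (2*m+2) = m := by
  have hτ : tauRed m x e
      = List.replicate m false ++ [true] ++ List.replicate (m + 1) false := by
    rw [tauRed, dif_neg (by omega), if_pos he]
  have h1 : (List.replicate m false).length = m := by simp
  have h2 : (List.replicate m false ++ [true]).length = m + 1 := by simp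
  have hlen : (List.replicate m false ++ [true] ++ List.replicate (m+1) false).length
      = 2*m+2 := by simp; omega
  have hom : t % (2*m+2) < 2*m+2 := Nat.mod_lt _ (by omega)
  rw [present, hτ, hlen]
  rcases lt_trichotomy (t % (2*m+2)) m with h | h | h
  · rw [List.getD_append _ _ _ _ (by rw [h2]; omega),
      List.getD_append _ _ _ _ (by rw [h1]; omega), getD_rep h]
    simp; omega
  · rw [List.getD_append _ _ _ _ (by rw [h2]; omega),
      List.getD_append_right _ _ _ _ (by rw [h1]; omega), h1, h]
    simp [h]
  · rw [List.getD_append_right _ _ _ _ (by rw [h2]; omega), h2,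
      getD_rep (show t % (2*m+2) - (m+1) < m + 1 by omega)]
    simp; omega

lemma present_s {m : ℕ} (x : Fin m → List Bool) (e : Fin (m+2)) (he : e.val = m+1) (t : ℕ) :
    present (tauRed m x) e t ↔ t % (2*m+2) = 2*m+1 := by
  have hτ : tauRed m x e = List.replicate (2*m+1) false ++ [true] := by
    rw [tauRed, dif_neg (by omega), if_neg (by omega)]
  have h1 : (List.replicate (2*m+1) false).length = 2*m+1 := by simp
  have hlen : (List.replicate (2*m+1) false ++ [true]).length = 2*m+2 := by simp
  have hom : t % (2*m+2) < 2*m+2 := Nat.mod_lt _ (by omega)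
  rw [present, hτ, hlen]
  rcases lt_or_ge (t % (2*m+2)) (2*m+1) with h | h
  · rw [List.getD_append _ _ _ _ (by rw [h1]; omega), getD_rep h]
    simp; omega
  · have h' : t % (2*m+2) = 2*m+1 := by omega
    rw [List.getD_append_right _ _ _ _ (by rw [h1]; omega), h1, h']
    simp [h']

lemma succ_mod_lt {q t : ℕ} (hq : 0 < q) (h : t % q < q - 1) :
    (t+1) % q = t % q + 1 ∧ (t+1) / q = t / q := by
  have hd := Nat.div_add_mod t q
  have h1 : t + 1 = q * (t/q) + (t % q + 1) := by omega
  constructor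
  · rw [h1, Nat.mul_add_mod, Nat.mod_eq_of_lt (by omega)]
  · rw [h1, Nat.mul_add_div hq, Nat.div_eq_of_lt (show t % q + 1 < q by omega)]
    omega

lemma succ_mod_eq {q t : ℕ} (hq : 0 < q) (h : t % q = q - 1) :
    (t+1) % q = 0 ∧ (t+1) / q = t / q + 1 := by
  have hd := Nat.div_add_mod t q
  have h1 : t + 1 = q * (t/q + 1) := by ring_nf; omega
  constructor
  · rw [h1, Nat.mul_mod_right]
  · rw [h1, Nat.mul_div_cancel_left _ hq]


/-- The robber's strategy. -/
def rob (m : ℕ) : Strat (m+2) := fun t c r =>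
  if r.val = m+1 then
    (if t % (2*m+2) = 2*m+1 ∧ c.val ≠ 0 then ⟨0, by omega⟩ else r)
  else if r.val = m then
    (if t % (2*m+2) = m ∧ c.val ≠ m+1 then ⟨m+1, by omega⟩ else r)
  else
    (if c.val = m+1 ∧ m+1 ≤ t % (2*m+2) ∧ t % (2*m+2) ≤ 2*m then
      ⟨(r.val+1) % (m+2), Nat.mod_lt _ (by omega)⟩ else r)

lemma rob_valid {m : ℕ} (x : Fin m → List Bool) (hne : ∀ j, x j ≠ []) :
    robValid (tauRed m x) (rob m) := by
  intro t c r
  unfold rob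
  split_ifs with h1 h2 h3 h4 h5
  · exact Or.inr ⟨by simp [h1, Nat.mod_self], (present_s x r h1 t).2 h2.1⟩
  · exact Or.inl rfl
  · exact Or.inr ⟨by rw [h3]; exact (Nat.mod_eq_of_lt (by omega)).symm,
      (present_m x r h3 t).2 h4.1⟩
  · exact Or.inl rfl
  · have hr : r.val < m := by have := r.2; omega
    exact Or.inr ⟨rfl,
      (present_lt x hne r ⟨r.val, hr⟩ rfl t).2 (Or.inl h5.2.1)⟩
  · exact Or.inl rfl

/-- The robber's invariant. -/
def Inv (m : ℕ) (x : Fin m → List Bool) (t : ℕ) (c r : Fin (m+2)) : Prop :=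
  (r.val = 0 ∧ 1 ≤ c.val ∧ c.val ≤ m) ∨
  (c.val = m+1 ∧ m+1 ≤ t % (2*m+2) ∧ r.val + (m+1) = t % (2*m+2)) ∨
  (c.val = m+1 ∧ r.val = m) ∨
  (r.val = m ∧ t % (2*m+2) ≤ m ∧
    ∃ j : Fin m, c.val ≤ j.val ∧ (x j).getD ((t/(2*m+2)) % (x j).length) false = false) ∨
  (r.val = m+1 ∧ m+1 ≤ t % (2*m+2) ∧ c.val ≤ m) ∨
  (r.val = m+1 ∧ t % (2*m+2) ≤ m ∧
    ∃ j : Fin m, c.val ≤ j.val ∧ (x j).getD ((t/(2*m+2)) % (x j).length) false = false)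

lemma inv_ne {m : ℕ} {x : Fin m → List Bool} {t : ℕ} {c r : Fin (m+2)}
    (hm : 1 ≤ m) (h : Inv m x t c r) : c ≠ r := by
  have hom : t % (2*m+2) < 2*m+2 := Nat.mod_lt _ (by omega)
  intro he
  have hv := congrArg Fin.val he
  rcases h with ⟨h1, h2, h3⟩ | ⟨h1, h2, h3⟩ | ⟨h1, h2⟩ | ⟨h1, h2, j, h3, h4⟩ |
      ⟨h1, h2, h3⟩ | ⟨h1, h2, j, h3, h4⟩
  · omega
  · omega
  · omega
  · have := j.2; omega
  · omega
  · have := j.2; omega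


lemma cop_A {m : ℕ} {x : Fin m → List Bool} (hne : ∀ j, x j ≠ []) {t : ℕ}
    {c c' : Fin (m+2)} (hc1 : 1 ≤ c.val) (hc2 : c.val ≤ m)
    (h : moveOK (tauRed m x) t c c') :
    (1 ≤ c'.val ∧ c'.val ≤ m) ∨ (c'.val = m+1 ∧ t % (2*m+2) = m) := by
  rcases h with rfl | ⟨hv, hp⟩
  · exact Or.inl ⟨hc1, hc2⟩
  · have hv' : c'.val = c.val + 1 := by rw [hv]; exact Nat.mod_eq_of_lt (by omega)
    rcases Nat.lt_or_ge c.val m with h | h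
    · exact Or.inl ⟨by omega, by omega⟩
    · have hcm : c.val = m := by omega
      exact Or.inr ⟨by omega, (present_m x c hcm t).1 hp⟩

lemma cop_blocked {m : ℕ} {x : Fin m → List Bool} (hne : ∀ j, x j ≠ []) {t : ℕ}
    {c c' : Fin (m+2)} (j : Fin m) (hc : c.val ≤ j.val)
    (hb : (x j).getD ((t/(2*m+2)) % (x j).length) false = false)
    (ho : t % (2*m+2) ≤ m)
    (h : moveOK (tauRed m x) t c c') : c'.val ≤ j.val := by
  rcases h with rfl | ⟨hv, hp⟩
  · exact hc
  · have hv' : c'.val = c.val + 1 := by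
      rw [hv]; exact Nat.mod_eq_of_lt (by have := j.2; omega)
    rcases Nat.lt_or_ge c.val j.val with h | h
    · omega
    · have hcj : c.val = j.val := by omega
      have := (present_lt x hne c j hcj t).1 hp
      rcases this with h1 | ⟨h1, h2⟩
      · omega
      · rw [hb] at h2; exact absurd h2 (by simp)

lemma cop_S {m : ℕ} {x : Fin m → List Bool} (hne : ∀ j, x j ≠ []) {t : ℕ}
    {c c' : Fin (m+2)} (hc : c.val ≤ m) (ho : t % (2*m+2) ≠ m)
    (h : moveOK (tauRed m x) t c c') : c'.val ≤ m := by
  rcases h with rfl | ⟨hv, hp⟩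
  · exact hc
  · have hv' : c'.val = (c.val + 1) % (m+2) := hv
    rcases Nat.lt_or_ge c.val m with h | h
    · rw [hv', Nat.mod_eq_of_lt (by omega)]; omega
    · have hcm : c.val = m := by omega
      exact absurd ((present_m x c hcm t).1 hp) ho

lemma cop_s {m : ℕ} {x : Fin m → List Bool} {t : ℕ}
    {c c' : Fin (m+2)} (hc : c.val = m+1)
    (h : moveOK (tauRed m x) t c c') :
    c'.val = m+1 ∨ (c'.val = 0 ∧ t % (2*m+2) = 2*m+1) := by
  rcases h with rfl | ⟨hv, hp⟩
  · exact Or.inl hc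
  · refine Or.inr ⟨?_, (present_s x c hc t).1 hp⟩
    rw [hv, hc, Nat.mod_self]


lemma rob_low_stay {m t : ℕ} {c r : Fin (m+2)} (hm : 1 ≤ m) (hr : r.val < m)
    (h : ¬(c.val = m+1 ∧ m+1 ≤ t % (2*m+2) ∧ t % (2*m+2) ≤ 2*m)) : rob m t c r = r := by
  unfold rob
  rw [if_neg (by omega), if_neg (by omega), if_neg h]

lemma rob_low_move {m t : ℕ} {c r : Fin (m+2)} (hm : 1 ≤ m) (hr : r.val < m)
    (h : c.val = m+1 ∧ m+1 ≤ t % (2*m+2) ∧ t % (2*m+2) ≤ 2*m) :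
    (rob m t c r).val = r.val + 1 := by
  unfold rob
  rw [if_neg (by omega), if_neg (by omega), if_pos h]
  exact Nat.mod_eq_of_lt (by omega)

lemma rob_m_stay {m t : ℕ} {c r : Fin (m+2)} (hr : r.val = m)
    (h : ¬(t % (2*m+2) = m ∧ c.val ≠ m+1)) : rob m t c r = r := by
  unfold rob
  rw [if_neg (by omega), if_pos hr, if_neg h]

lemma rob_m_move {m t : ℕ} {c r : Fin (m+2)} (hr : r.val = m)
    (h : t % (2*m+2) = m ∧ c.val ≠ m+1) : (rob m t c r).val = m+1 := by
  unfold rob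
  rw [if_neg (by omega), if_pos hr, if_pos h]

lemma rob_s_stay {m t : ℕ} {c r : Fin (m+2)} (hr : r.val = m+1)
    (h : ¬(t % (2*m+2) = 2*m+1 ∧ c.val ≠ 0)) : rob m t c r = r := by
  unfold rob
  rw [if_pos hr, if_neg h]

lemma rob_s_move {m t : ℕ} {c r : Fin (m+2)} (hr : r.val = m+1)
    (h : t % (2*m+2) = 2*m+1 ∧ c.val ≠ 0) : (rob m t c r).val = 0 := by
  unfold rob
  rw [if_pos hr, if_pos h]



lemma step {m : ℕ} (hm : 1 ≤ m) {x : Fin m → List Bool} (hne : ∀ j, x j ≠ [])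
    (hno : ∀ t : ℕ, ∃ j, (x j).getD (t % (x j).length) false = false)
    {t : ℕ} {c r c' : Fin (m+2)}
    (hInv : Inv m x t c r) (hmove : moveOK (tauRed m x) t c c') :
    c' ≠ r ∧ Inv m x (t+1) c' (rob m t c' r) := by
  have hq : 0 < 2*m+2 := by omega
  have hom : t % (2*m+2) < 2*m+2 := Nat.mod_lt _ hq
  rcases hInv with ⟨hr, hc1, hc2⟩ | ⟨hc, ho, hr⟩ | ⟨hc, hr⟩ | ⟨hr, ho, j, hcj, hbj⟩ |
      ⟨hr, ho, hc⟩ | ⟨hr, ho, j, hcj, hbj⟩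
  -- Case A : robber at v_0, cop in v_1..v_m
  · rcases cop_A hne hc1 hc2 hmove with ⟨h1, h2⟩ | ⟨h1, h2⟩
    · refine ⟨Fin.ne_of_val_ne (by omega), ?_⟩
      rw [rob_low_stay (t := t) (c := c') hm (by omega) (by omega)]
      exact Or.inl ⟨hr, h1, h2⟩
    · -- cop crossed to s at offset m
      obtain ⟨hmo, _⟩ := succ_mod_lt (t := t) hq (by omega)
      refine ⟨Fin.ne_of_val_ne (by omega), ?_⟩
      rw [rob_low_stay (t := t) (c := c') hm (by omega) (by omega)]
      exact Or.inr (Or.inl ⟨h1, by omega, by omega⟩)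
  -- Case R : run, cop at s
  · rcases Nat.lt_or_ge (t % (2*m+2)) (2*m+1) with hlt | hge
    · have h1 : c'.val = m+1 := by
        rcases cop_s hc hmove with h | ⟨_, h⟩; · exact h
        · omega
      obtain ⟨hmo, _⟩ := succ_mod_lt (t := t) hq (by omega)
      refine ⟨Fin.ne_of_val_ne (by omega), ?_⟩
      have hrm : r.val < m := by omega
      have hmv := rob_low_move (t := t) (c := c') hm hrm ⟨h1, by omega, by omega⟩
      exact Or.inr (Or.inl ⟨h1, by omega, by omega⟩)
    · have hoeq : t % (2*m+2) = 2*m+1 := by omega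
      have hrm : r.val = m := by omega
      obtain ⟨hmo, hdo⟩ := succ_mod_eq (t := t) hq (by omega)
      rcases cop_s hc hmove with h1 | ⟨h1, _⟩
      · refine ⟨Fin.ne_of_val_ne (by omega), ?_⟩
        rw [rob_m_stay (t := t) (c := c') hrm (by omega)]
        exact Or.inr (Or.inr (Or.inl ⟨h1, hrm⟩))
      · refine ⟨Fin.ne_of_val_ne (by omega), ?_⟩
        rw [rob_m_stay (t := t) (c := c') hrm (by omega)]
        obtain ⟨j, hj⟩ := hno (t / (2*m+2) + 1)
        refine Or.inr (Or.inr (Or.inr (Or.inl ⟨hrm, by omega, j, by omega, ?_⟩)))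
        rw [hdo]; exact hj
  -- Case C : cop at s, robber at v_m
  · rcases cop_s hc hmove with h1 | ⟨h1, h2⟩
    · refine ⟨Fin.ne_of_val_ne (by omega), ?_⟩
      rw [rob_m_stay (t := t) (c := c') hr (by omega)]
      exact Or.inr (Or.inr (Or.inl ⟨h1, hr⟩))
    · obtain ⟨hmo, hdo⟩ := succ_mod_eq (t := t) hq (by omega)
      refine ⟨Fin.ne_of_val_ne (by omega), ?_⟩
      rw [rob_m_stay (t := t) (c := c') hr (by omega)]
      obtain ⟨j, hj⟩ := hno (t / (2*m+2) + 1)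
      refine Or.inr (Or.inr (Or.inr (Or.inl ⟨hr, by omega, j, by omega, ?_⟩)))
      rw [hdo]; exact hj
  -- Case B : cop blocked below v_j, robber at v_m, first half of period
  · have hjm := j.2
    have hc' : c'.val ≤ j.val := cop_blocked hne j hcj hbj ho hmove
    refine ⟨Fin.ne_of_val_ne (by omega), ?_⟩
    rcases Nat.lt_or_ge (t % (2*m+2)) m with hlt | hge
    · obtain ⟨hmo, hdo⟩ := succ_mod_lt (t := t) hq (by omega)
      rw [rob_m_stay (t := t) (c := c') hr (by omega)]
      refine Or.inr (Or.inr (Or.inr (Or.inl ⟨hr, by omega, j, hc', ?_⟩)))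
      rw [hdo]; exact hbj
    · have hoeq : t % (2*m+2) = m := by omega
      obtain ⟨hmo, _⟩ := succ_mod_lt (t := t) hq (by omega)
      have hmv := rob_m_move (t := t) (c := c') hr ⟨hoeq, by omega⟩
      exact Or.inr (Or.inr (Or.inr (Or.inr (Or.inl ⟨hmv, by omega, by omega⟩))))
  -- Case S : robber at s, cop at most v_m, second half of period
  · have hc' : c'.val ≤ m := cop_S hne hc (by omega) hmove
    refine ⟨Fin.ne_of_val_ne (by omega), ?_⟩
    rcases Nat.lt_or_ge (t % (2*m+2)) (2*m+1) with hlt | hge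
    · obtain ⟨hmo, _⟩ := succ_mod_lt (t := t) hq (by omega)
      rw [rob_s_stay (t := t) (c := c') hr (by omega)]
      exact Or.inr (Or.inr (Or.inr (Or.inr (Or.inl ⟨hr, by omega, hc'⟩))))
    · have hoeq : t % (2*m+2) = 2*m+1 := by omega
      obtain ⟨hmo, hdo⟩ := succ_mod_eq (t := t) hq (by omega)
      rcases Nat.eq_zero_or_pos c'.val with h0 | h0
      · rw [rob_s_stay (t := t) (c := c') hr (by omega)]
        obtain ⟨j, hj⟩ := hno (t / (2*m+2) + 1)
        refine Or.inr (Or.inr (Or.inr (Or.inr (Or.inr ⟨hr, by omega, j, by omega, ?_⟩))))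
        rw [hdo]; exact hj
      · have hmv := rob_s_move (t := t) (c := c') hr ⟨hoeq, by omega⟩
        exact Or.inl ⟨hmv, by omega, by omega⟩
  -- Case S0 : robber at s, cop blocked, first half of period
  · have hjm := j.2
    have hc' : c'.val ≤ j.val := cop_blocked hne j hcj hbj ho hmove
    refine ⟨Fin.ne_of_val_ne (by omega), ?_⟩
    rw [rob_s_stay (t := t) (c := c') hr (by omega)]
    rcases Nat.lt_or_ge (t % (2*m+2)) m with hlt | hge
    · obtain ⟨hmo, hdo⟩ := succ_mod_lt (t := t) hq (by omega)
      refine Or.inr (Or.inr (Or.inr (Or.inr (Or.inr ⟨hr, by omega, j, hc', ?_⟩))))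
      rw [hdo]; exact hbj
    · obtain ⟨hmo, _⟩ := succ_mod_lt (t := t) hq (by omega)
      exact Or.inr (Or.inr (Or.inr (Or.inr (Or.inl ⟨hr, by omega, by omega⟩))))


end EPD

open EPD in
/-- Backward direction of the reduction: if every position `t` has some `x ∈ X` with
`x[t mod |x|] = 0`, then in the directed edge-periodic cycle of the reduction the robber
can evade the cop forever; hence the cycle is robber-winning. -/
theorem stmt_13 (m : ℕ) (hm : 1 ≤ m) (x : Fin m → List Bool)
    (hne : ∀ j, x j ≠ [])
    (hno : ∀ t : ℕ, ∃ j, (x j).getD (t % (x j).length) false = false) :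
    robberWinning (tauRed m x) := by
  intro c0 σc hσc
  classical
  set r0 : Fin (m+2) :=
    if 1 ≤ c0.val ∧ c0.val ≤ m then ⟨0, by omega⟩ else ⟨m, by omega⟩ with hr0
  refine ⟨r0, rob m, rob_valid x hne, ?_⟩
  have hInv : ∀ t, Inv m x t (pos σc (rob m) c0 r0 t).1 (pos σc (rob m) c0 r0 t).2 := by
    intro t
    induction t with
    | zero =>
      show Inv m x 0 c0 r0
      by_cases h : 1 ≤ c0.val ∧ c0.val ≤ m
      · rw [hr0, if_pos h]; exact Or.inl ⟨rfl, h.1, h.2⟩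
      · rw [hr0, if_neg h]
        have hc0 : c0.val = 0 ∨ c0.val = m+1 := by have := c0.2; omega
        rcases hc0 with h0 | h0
        · obtain ⟨j, hj⟩ := hno 0
          refine Or.inr (Or.inr (Or.inr (Or.inl ⟨rfl, by simp, j, by omega, ?_⟩)))
          simpa using hj
        · exact Or.inr (Or.inr (Or.inl ⟨h0, rfl⟩))
    | succ t ih =>
      have h := (step hm hne hno ih (hσc t (pos σc (rob m) c0 r0 t).1
        (pos σc (rob m) c0 r0 t).2)).2
      simpa [pos] using h
  intro hc
  rcases hc with h0 | ⟨t, ht⟩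
  · exact inv_ne hm (hInv 0) h0
  · exact (step hm hne hno (hInv t) (hσc t _ _)).1 ht
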